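/- Let p ≥ 7 be a prime, q ∈ {4/3, 7/6, 5/4}, and β = {1, 1, q, 2-q}. Then the multiset of Dwork dashes β' = {1', 1', q', (2-q)'} equals {1, 1, q-1, 2-q} as multisets. -/

import Mathlib

/-- The Dwork dash operation `x ↦ (x + [-x]₀)/p`, valued in `ℚ_p`. -/
noncomputable def dwork (p : ℕ) [Fact p.Prime] (x : ℤ_[p]) : ℚ_[p] :=
  ((x : ℚ_[p]) + (((-x).appr 1 : ℕ) : ℚ_[p])) / (p : ℚ_[p])

lemma appr_one_eq {p : ℕ} [hp : Fact p.Prime] (x : ℤ_[p]) (n : ℕ) (hn : n < p)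
    (h : x - (n : ℤ_[p]) ∈ Ideal.span {(p : ℤ_[p])}) : x.appr 1 = n := by
  have h1 : x - ((x.appr 1 : ℕ) : ℤ_[p]) ∈ Ideal.span {(p : ℤ_[p])} := by
    simpa using PadicInt.appr_spec 1 x
  have := PadicInt.zmod_congr_of_sub_mem_span 1 x (x.appr 1) n (by simpa) (by simpa)
  rw [pow_one, ZMod.natCast_eq_natCast_iff'] at this
  have hlt : x.appr 1 < p := by simpa using PadicInt.appr_lt x 1
  rwa [Nat.mod_eq_of_lt hlt, Nat.mod_eq_of_lt hn] at this

lemma dwork_eq {p : ℕ} [hp : Fact p.Prime] (x : ℤ_[p]) (q c : ℚ) (n : ℕ) (hn : n < p)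
    (hx : (x : ℚ_[p]) = (q : ℚ_[p])) (hqc : q + n = c * p) (hc : ¬ (p : ℤ) ∣ c.den) :
    dwork p x = (c : ℚ_[p]) := by
  have hp0 : (p : ℚ_[p]) ≠ 0 := by
    exact_mod_cast (Nat.cast_ne_zero (R := ℚ_[p])).mpr hp.out.ne_zero
  have hcn : ‖(c : ℚ_[p])‖ ≤ 1 := Padic.norm_rat_le_one (by exact_mod_cast hc)
  have hxn : ((x + (n : ℤ_[p]) : ℤ_[p]) : ℚ_[p]) = (c : ℚ_[p]) * p := by
    push_cast [hx]
    exact_mod_cast congrArg (fun r : ℚ => (r : ℚ_[p])) hqc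
  have happr : (-x).appr 1 = n := by
    apply appr_one_eq _ _ hn
    rw [Ideal.mem_span_singleton, ← PadicInt.norm_lt_one_iff_dvd]
    have : ‖(-x - (n : ℤ_[p]) : ℤ_[p])‖ = ‖(x + (n : ℤ_[p]) : ℤ_[p])‖ := by
      rw [show (-x - (n : ℤ_[p]) : ℤ_[p]) = -(x + n) by ring, norm_neg]
    rw [this, PadicInt.norm_def, hxn, norm_mul, Padic.norm_p]
    calc ‖(c : ℚ_[p])‖ * (p : ℝ)⁻¹ ≤ 1 * (p : ℝ)⁻¹ := by
          apply mul_le_mul_of_nonneg_right hcn (by positivity)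
      _ < 1 := by
          rw [one_mul, inv_lt_one_iff₀]
          right
          exact_mod_cast hp.out.one_lt
  unfold dwork
  rw [happr]
  rw [div_eq_iff hp0]
  push_cast at hxn ⊢
  exact hxn


lemma den_not_dvd {p : ℕ} (hp : 7 ≤ p) {c : ℚ} (h : c.den < 7) : ¬ (p : ℤ) ∣ (c.den : ℤ) := by
  intro hd
  have h0 : (0 : ℤ) < (c.den : ℤ) := by exact_mod_cast c.pos
  have h1 := Int.le_of_dvd h0 hd
  have h2 : p ≤ c.den := by exact_mod_cast h1
  omega

lemma quad_swap {α : Type*} (a b c : α) : ({a, a, b, c} : Multiset α) = {a, a, c, b} := by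
  simp only [Multiset.insert_eq_cons]
  exact congrArg _ (congrArg _ (Multiset.cons_swap _ _ _))

/-- Let `p ≥ 7` be prime, `q ∈ {4/3, 7/6, 5/4}`, and `β = {1, 1, q, 2-q}`.  Then the multiset
of Dwork dashes `β' = {1', 1', q', (2-q)'}` equals `{1, 1, q-1, 2-q}` as multisets. -/
theorem stmt11 (p : ℕ) [Fact p.Prime] (hp : 7 ≤ p) (q : ℚ)
    (hq : q ∈ ({4/3, 7/6, 5/4} : Set ℚ))
    (x y : ℤ_[p])
    (hx : (x : ℚ_[p]) = (q : ℚ_[p])) (hy : (y : ℚ_[p]) = ((2 - q : ℚ) : ℚ_[p])) :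
    ({dwork p 1, dwork p 1, dwork p x, dwork p y} : Multiset ℚ_[p]) =
      ({(1 : ℚ_[p]), (1 : ℚ_[p]), ((q - 1 : ℚ) : ℚ_[p]), ((2 - q : ℚ) : ℚ_[p])} :
        Multiset ℚ_[p]) := by
  have hprime := (Fact.out : p.Prime)
  have hone : dwork p 1 = ((1 : ℚ) : ℚ_[p]) := by
    apply dwork_eq (1 : ℤ_[p]) 1 1 (p - 1) (by omega) (by push_cast; ring)
    · push_cast [Nat.cast_sub (by omega : 1 ≤ p)]; ring
    · exact den_not_dvd hp (by norm_num)
  have h2 : ¬ (2 ∣ p) := fun h => by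
    have := (Nat.prime_dvd_prime_iff_eq Nat.prime_two hprime).mp h; omega
  have h3 : ¬ (3 ∣ p) := fun h => by
    have := (Nat.prime_dvd_prime_iff_eq Nat.prime_three hprime).mp h; omega
  rw [hone]
  simp only [Set.mem_insert_iff, Set.mem_singleton_iff] at hq
  rcases hq with rfl | rfl | rfl
  · -- q = 4/3
    rcases (by omega : p % 3 = 1 ∨ p % 3 = 2) with h | h
    · obtain ⟨m, rfl⟩ : ∃ m, p = 3 * m + 4 := ⟨(p - 4) / 3, by omega⟩
      have hdx := dwork_eq x (4/3) (1/3) m (by omega) hx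
        (by push_cast; ring) (den_not_dvd hp (by norm_num))
      have hdy := dwork_eq y (2 - 4/3) (2/3) (2 * m + 2) (by omega) hy
        (by push_cast; ring) (den_not_dvd hp (by norm_num))
      rw [hdx, hdy]
      norm_num
    · obtain ⟨m, rfl⟩ : ∃ m, p = 3 * m + 2 := ⟨(p - 2) / 3, by omega⟩
      have hdx := dwork_eq x (4/3) (2/3) (2 * m) (by omega) hx
        (by push_cast; ring) (den_not_dvd hp (by norm_num))
      have hdy := dwork_eq y (2 - 4/3) (1/3) m (by omega) hy
        (by push_cast; ring) (den_not_dvd hp (by norm_num))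
      rw [hdx, hdy, quad_swap]
      norm_num
  · -- q = 7/6
    rcases (by omega : p % 6 = 1 ∨ p % 6 = 5) with h | h
    · obtain ⟨m, rfl⟩ : ∃ m, p = 6 * m + 7 := ⟨(p - 7) / 6, by omega⟩
      have hdx := dwork_eq x (7/6) (1/6) m (by omega) hx
        (by push_cast; ring) (den_not_dvd hp (by norm_num))
      have hdy := dwork_eq y (2 - 7/6) (5/6) (5 * m + 5) (by omega) hy
        (by push_cast; ring) (den_not_dvd hp (by norm_num))
      rw [hdx, hdy]
      norm_num
    · obtain ⟨m, rfl⟩ : ∃ m, p = 6 * m + 5 := ⟨(p - 5) / 6, by omega⟩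
      have hdx := dwork_eq x (7/6) (5/6) (5 * m + 3) (by omega) hx
        (by push_cast; ring) (den_not_dvd hp (by norm_num))
      have hdy := dwork_eq y (2 - 7/6) (1/6) m (by omega) hy
        (by push_cast; ring) (den_not_dvd hp (by norm_num))
      rw [hdx, hdy, quad_swap]
      norm_num
  · -- q = 5/4
    rcases (by omega : p % 4 = 1 ∨ p % 4 = 3) with h | h
    · obtain ⟨m, rfl⟩ : ∃ m, p = 4 * m + 5 := ⟨(p - 5) / 4, by omega⟩
      have hdx := dwork_eq x (5/4) (1/4) m (by omega) hx
        (by push_cast; ring) (den_not_dvd hp (by norm_num))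
      have hdy := dwork_eq y (2 - 5/4) (3/4) (3 * m + 3) (by omega) hy
        (by push_cast; ring) (den_not_dvd hp (by norm_num))
      rw [hdx, hdy]
      norm_num
    · obtain ⟨m, rfl⟩ : ∃ m, p = 4 * m + 3 := ⟨(p - 3) / 4, by omega⟩
      have hdx := dwork_eq x (5/4) (3/4) (3 * m + 1) (by omega) hx
        (by push_cast; ring) (den_not_dvd hp (by norm_num))
      have hdy := dwork_eq y (2 - 5/4) (1/4) m (by omega) hy
        (by push_cast; ring) (den_not_dvd hp (by norm_num))
      rw [hdx, hdy, quad_swap]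
      norm_num
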